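/- Let J22, J23, J33, Σ_R, G2 be complex matrices with J22 skew-Hermitian of size n2, J33 skew-Hermitian of size n3, Σ_R Hermitian positive definite of size n2. If rank([[J22 − Σ_R, J23],[−J23*, J33],[G2*, 0]]) = n2 + n3 (full column rank) then rank([J23; J33]) = n3. -/

import Mathlib

open Matrix
open scoped ComplexOrder

/-- Full column rank of the augmented matrix [[J22 − Σ_R, J23],[−J23*, J33],[G2*, 0]]
forces [J23; J33] to have full column rank n3. -/
theorem stmt_17 {n2 n3 m : ℕ}
    (J22 SigR : Matrix (Fin n2) (Fin n2) ℂ)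
    (J23 : Matrix (Fin n2) (Fin n3) ℂ)
    (J33 : Matrix (Fin n3) (Fin n3) ℂ)
    (G2 : Matrix (Fin n2) (Fin m) ℂ)
    (hJ22 : J22ᴴ = -J22) (hJ33 : J33ᴴ = -J33) (hSigR : SigR.PosDef)
    (hrank : (Matrix.fromRows (Matrix.fromCols (J22 - SigR) J23)
        (Matrix.fromRows (Matrix.fromCols (-J23ᴴ) J33)
          (Matrix.fromCols G2ᴴ (0 : Matrix (Fin m) (Fin n3) ℂ)))).rank = n2 + n3) :
    (Matrix.fromRows J23 J33).rank = n3 := by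
  set B := (Matrix.fromRows (Matrix.fromCols (J22 - SigR) J23)
        (Matrix.fromRows (Matrix.fromCols (-J23ᴴ) J33)
          (Matrix.fromCols G2ᴴ (0 : Matrix (Fin m) (Fin n3) ℂ)))) with hB
  -- kernel of B is trivial
  have hdim : Matrix.rank B + Module.finrank ℂ (LinearMap.ker B.mulVecLin)
      = n2 + n3 := by
    have := LinearMap.finrank_range_add_finrank_ker B.mulVecLin
    rw [Module.finrank_pi] at this
    simpa [Matrix.rank] using this
  have hkerB : LinearMap.ker B.mulVecLin = ⊥ := by
    have h0 : Module.finrank ℂ (LinearMap.ker B.mulVecLin) = 0 := by omega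
    exact Submodule.finrank_eq_zero.mp h0
  -- kernel of the small matrix is trivial
  have hker : LinearMap.ker (Matrix.fromRows J23 J33).mulVecLin = ⊥ := by
    rw [Submodule.eq_bot_iff]
    intro v hv
    rw [LinearMap.mem_ker, Matrix.mulVecLin_apply, Matrix.fromRows_mulVec] at hv
    have h1 : J23 *ᵥ v = 0 := funext fun i => congrFun hv (Sum.inl i)
    have h2 : J33 *ᵥ v = 0 := funext fun i => congrFun hv (Sum.inr i)
    have hmem : (Sum.elim (0 : Fin n2 → ℂ) v) ∈ LinearMap.ker B.mulVecLin := by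
      rw [LinearMap.mem_ker, Matrix.mulVecLin_apply, hB]
      simp only [Matrix.fromRows_mulVec, Matrix.fromCols_mulVec_sumElim,
        Matrix.mulVec_zero, h1, h2, add_zero, zero_add]
      ext (i | i | i) <;> simp
    rw [hkerB, Submodule.mem_bot] at hmem
    exact funext fun i => congrFun hmem (Sum.inr i)
  have := LinearMap.finrank_range_add_finrank_ker (Matrix.fromRows J23 J33).mulVecLin
  rw [hker, Module.finrank_pi] at this
  simpa [Matrix.rank, finrank_bot] using this
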